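/- Let μ be the bracket on ℝ⁶ given by μ(e₁,e₂) = e₄, μ(e₁,e₃) = e₅, μ(e₂,e₃) = e₆. Then: (i) a symmetric 6×6 real matrix D is a derivation of μ if and only if there exist real a,b,c,d,e,f such that D = diag(S, S̃) in block form with S = [[a,b,c],[b,d,e],[c,e,f]] on span(e₁,e₂,e₃) and S̃ = [[a+d, e, −c],[e, a+f, b],[−c, b, d+f]] on span(e₄,e₅,e₆); (ii) the set {diag(a,b,c,a+b,a+c,b+c) : a,b,c ∈ ℝ} is a 3-dimensional subspace of pairwise-commuting symmetric derivations of μ, and every linear subspace of symmetric derivations of μ whose elements pairwise commute has dimension at most 3. -/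

import Mathlib

open Matrix

/-- The bracket on ℝ⁶ given by μ(e₁,e₂) = e₄, μ(e₁,e₃) = e₅, μ(e₂,e₃) = e₆
(bilinear extension); this is the nilsoliton μ₂₄ = (0,0,0,12,13,23),
the free 2-step nilpotent Lie algebra on three generators. -/
def mu24 (x y : Fin 6 → ℝ) : Fin 6 → ℝ :=
  ![0, 0, 0, x 0 * y 1 - x 1 * y 0, x 0 * y 2 - x 2 * y 0, x 1 * y 2 - x 2 * y 1]

/-- `D` is a derivation of the bracket `mu24`. -/
def IsDerivMu24 (D : Matrix (Fin 6) (Fin 6) ℝ) : Prop :=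
  ∀ x y : Fin 6 → ℝ, D.mulVec (mu24 x y) = mu24 (D.mulVec x) y + mu24 x (D.mulVec y)

/-- The set {diag(a,b,c,a+b,a+c,b+c) : a,b,c ∈ ℝ}. -/
def S24 : Set (Matrix (Fin 6) (Fin 6) ℝ) :=
  {D | ∃ a b c : ℝ, D = Matrix.diagonal ![a, b, c, a + b, a + c, b + c]}

/- ### Auxiliary material -/

@[simp]
lemma cons_val_five' {m : ℕ} {α : Type*} (x : α) (u : Fin (m + 5) → α) :
    vecCons x u 5 = vecHead (vecTail (vecTail (vecTail (vecTail u)))) :=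
  rfl

/-- The general symmetric derivation of `mu24`. -/
def bigM (a b c d e f : ℝ) : Matrix (Fin 6) (Fin 6) ℝ :=
  !![a, b, c, 0, 0, 0;
     b, d, e, 0, 0, 0;
     c, e, f, 0, 0, 0;
     0, 0, 0, a + d, e, -c;
     0, 0, 0, e, a + f, b;
     0, 0, 0, -c, b, d + f]

lemma bigM_isDeriv (a b c d e f : ℝ) : IsDerivMu24 (bigM a b c d e f) := by
  intro x y
  funext k
  fin_cases k <;>
    simp [mu24, bigM, Matrix.mulVec, dotProduct, Fin.sum_univ_six, Matrix.vecHead, Matrix.vecTail] <;> ring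

set_option maxHeartbeats 2000000 in
lemma isDeriv_char (D : Matrix (Fin 6) (Fin 6) ℝ) (hD : D.IsSymm) (h : IsDerivMu24 D) :
    ∃ a b c d e f : ℝ, D = bigM a b c d e f := by
  refine ⟨D 0 0, D 0 1, D 0 2, D 1 1, D 1 2, D 2 2, ?_⟩
  have hs : ∀ i j, D j i = D i j := fun i j => hD.apply i j
  have h01 := h ![1,0,0,0,0,0] ![0,1,0,0,0,0]
  have h02 := h ![1,0,0,0,0,0] ![0,0,1,0,0,0]
  have h12 := h ![0,1,0,0,0,0] ![0,0,1,0,0,0]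
  have q1 : D 0 3 = 0 := by simpa [mu24, Matrix.mulVec, dotProduct, Fin.sum_univ_six, Matrix.vecHead, Matrix.vecTail] using congrFun h01 0
  have q2 : D 1 3 = 0 := by simpa [mu24, Matrix.mulVec, dotProduct, Fin.sum_univ_six, Matrix.vecHead, Matrix.vecTail] using congrFun h01 1
  have q3 : D 2 3 = 0 := by simpa [mu24, Matrix.mulVec, dotProduct, Fin.sum_univ_six, Matrix.vecHead, Matrix.vecTail] using congrFun h01 2
  have q4 : D 3 3 = D 0 0 + D 1 1 := by simpa [mu24, Matrix.mulVec, dotProduct, Fin.sum_univ_six, Matrix.vecHead, Matrix.vecTail] using congrFun h01 3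
  have q5 : D 4 3 = D 2 1 := by simpa [mu24, Matrix.mulVec, dotProduct, Fin.sum_univ_six, Matrix.vecHead, Matrix.vecTail] using congrFun h01 4
  have q6 : D 5 3 = -(D 2 0) := by simpa [mu24, Matrix.mulVec, dotProduct, Fin.sum_univ_six, Matrix.vecHead, Matrix.vecTail] using congrFun h01 5
  have q7 : D 0 4 = 0 := by simpa [mu24, Matrix.mulVec, dotProduct, Fin.sum_univ_six, Matrix.vecHead, Matrix.vecTail] using congrFun h02 0
  have q8 : D 1 4 = 0 := by simpa [mu24, Matrix.mulVec, dotProduct, Fin.sum_univ_six, Matrix.vecHead, Matrix.vecTail] using congrFun h02 1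
  have q9 : D 2 4 = 0 := by simpa [mu24, Matrix.mulVec, dotProduct, Fin.sum_univ_six, Matrix.vecHead, Matrix.vecTail] using congrFun h02 2
  have q10 : D 3 4 = D 1 2 := by simpa [mu24, Matrix.mulVec, dotProduct, Fin.sum_univ_six, Matrix.vecHead, Matrix.vecTail] using congrFun h02 3
  have q11 : D 4 4 = D 0 0 + D 2 2 := by simpa [mu24, Matrix.mulVec, dotProduct, Fin.sum_univ_six, Matrix.vecHead, Matrix.vecTail] using congrFun h02 4
  have q12 : D 5 4 = D 1 0 := by simpa [mu24, Matrix.mulVec, dotProduct, Fin.sum_univ_six, Matrix.vecHead, Matrix.vecTail] using congrFun h02 5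
  have q13 : D 0 5 = 0 := by simpa [mu24, Matrix.mulVec, dotProduct, Fin.sum_univ_six, Matrix.vecHead, Matrix.vecTail] using congrFun h12 0
  have q14 : D 1 5 = 0 := by simpa [mu24, Matrix.mulVec, dotProduct, Fin.sum_univ_six, Matrix.vecHead, Matrix.vecTail] using congrFun h12 1
  have q15 : D 2 5 = 0 := by simpa [mu24, Matrix.mulVec, dotProduct, Fin.sum_univ_six, Matrix.vecHead, Matrix.vecTail] using congrFun h12 2
  have q16 : D 3 5 = -(D 0 2) := by simpa [mu24, Matrix.mulVec, dotProduct, Fin.sum_univ_six, Matrix.vecHead, Matrix.vecTail] using congrFun h12 3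
  have q17 : D 4 5 = D 0 1 := by simpa [mu24, Matrix.mulVec, dotProduct, Fin.sum_univ_six, Matrix.vecHead, Matrix.vecTail] using congrFun h12 4
  have q18 : D 5 5 = D 1 1 + D 2 2 := by simpa [mu24, Matrix.mulVec, dotProduct, Fin.sum_univ_six, Matrix.vecHead, Matrix.vecTail] using congrFun h12 5
  clear h01 h02 h12 h
  ext i j
  fin_cases i <;> fin_cases j <;>
    simp [bigM, Matrix.vecHead, Matrix.vecTail] <;>
    linarith [q1,q2,q3,q4,q5,q6,q7,q8,q9,q10,q11,q12,q13,q14,q15,q16,q17,q18,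
      hs 0 1, hs 0 2, hs 1 2, hs 0 3, hs 0 4, hs 0 5, hs 1 3, hs 1 4, hs 1 5,
      hs 2 3, hs 2 4, hs 2 5]

lemma diag_eq_bigM (a b c : ℝ) :
    Matrix.diagonal ![a, b, c, a + b, a + c, b + c] = bigM a 0 0 b 0 c := by
  ext i j
  fin_cases i <;> fin_cases j <;>
    simp [bigM, Matrix.diagonal, Matrix.vecHead, Matrix.vecTail]

/-- A commuting subspace of symmetric real matrices has dimension at most the size. -/
lemma finrank_le_of_commuting_symm {k : ℕ} (W : Submodule ℝ (Matrix (Fin k) (Fin k) ℝ))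
    (h1 : ∀ A ∈ W, A.IsSymm) (h2 : ∀ A ∈ W, ∀ B ∈ W, A * B = B * A) :
    Module.finrank ℝ W ≤ k := by
  classical
  set E := EuclideanSpace ℝ (Fin k) with hE
  let T : W → (E →ₗ[ℝ] E) := fun w => Matrix.toEuclideanLin (w : Matrix (Fin k) (Fin k) ℝ)
  have hmul : ∀ A B : Matrix (Fin k) (Fin k) ℝ,
      Matrix.toEuclideanLin (A * B) = Matrix.toEuclideanLin A * Matrix.toEuclideanLin B := by
    intro A B
    rw [Matrix.toEuclideanLin_eq_toLin,
      Matrix.toLin_mul _ (PiLp.basisFun 2 ℝ (Fin k)) _]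
    rfl
  have hTsymm : ∀ w : W, (T w).IsSymmetric := fun w =>
    Matrix.isHermitian_iff_isSymmetric.mp
      (by rw [Matrix.IsHermitian, Matrix.conjTranspose_eq_transpose_of_trivial]
          exact h1 w w.2)
  have hTcomm : Pairwise (Function.onFun Commute T) := by
    intro w1 w2 _
    show T w1 * T w2 = T w2 * T w1
    show Matrix.toEuclideanLin _ * Matrix.toEuclideanLin _ = _
    rw [← hmul, ← hmul, h2 _ w1.2 _ w2.2]
  have htop := LinearMap.IsSymmetric.iSup_iInf_eq_top_of_commute hTsymm hTcomm
  have hspan : ⊤ ≤ Submodule.span ℝ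
      (⋃ χ : W → ℝ, ((⨅ w : W, Module.End.eigenspace (T w) (χ w) : Submodule ℝ E) : Set E)) := by
    rw [← Submodule.iSup_eq_span]; exact htop.ge
  let b := Module.Basis.ofSpan hspan
  haveI := FiniteDimensional.fintypeBasisIndex b
  have heig : ∀ i, ∃ χ : W → ℝ, ∀ w : W, T w (b i) = χ w • b i := by
    intro i
    have hmem : (b i : E) ∈
        ⋃ χ : W → ℝ, ((⨅ w : W, Module.End.eigenspace (T w) (χ w) : Submodule ℝ E) : Set E) := by
      apply Module.Basis.ofSpan_subset hspan
      exact Set.mem_range_self i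
    obtain ⟨s, ⟨χ, rfl⟩, hmem2⟩ := hmem
    exact ⟨χ, fun w => Module.End.mem_eigenspace_iff.mp ((Submodule.mem_iInf _).mp hmem2 w)⟩
  choose χ hχ using heig
  have hbne : ∀ i, b i ≠ 0 := b.ne_zero
  have hχadd : ∀ i (w w' : W), χ i (w + w') = χ i w + χ i w' := by
    intro i w w'
    apply smul_left_injective ℝ (hbne i)
    show χ i (w + w') • b i = (χ i w + χ i w') • b i
    rw [← hχ i (w + w'), add_smul, ← hχ i w, ← hχ i w']
    simp only [T, Submodule.coe_add, map_add, LinearMap.add_apply]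
  have hχsmul : ∀ i (r : ℝ) (w : W), χ i (r • w) = r * χ i w := by
    intro i r w
    apply smul_left_injective ℝ (hbne i)
    show χ i (r • w) • b i = (r * χ i w) • b i
    rw [← hχ i (r • w), mul_smul, ← hχ i w]
    simp only [T, SetLike.val_smul, _root_.map_smul, LinearMap.smul_apply]
  let Φ : W →ₗ[ℝ] (_ → ℝ) :=
    { toFun := fun w i => χ i w
      map_add' := fun w w' => funext fun i => hχadd i w w'
      map_smul' := fun r w => funext fun i => hχsmul i r w }
  have hΦinj : Function.Injective Φ := by
    rw [injective_iff_map_eq_zero]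
    intro w hw
    have hT0 : T w = 0 := by
      apply b.ext
      intro i
      rw [hχ i w]
      have : χ i w = 0 := congrFun hw i
      simp [this]
    have h0 : Matrix.toEuclideanLin (w : Matrix (Fin k) (Fin k) ℝ) =
        Matrix.toEuclideanLin (0 : Matrix (Fin k) (Fin k) ℝ) := by
      rw [map_zero]
      exact hT0
    exact Subtype.ext (Matrix.toEuclideanLin.injective h0)
  calc Module.finrank ℝ W ≤ Module.finrank ℝ (_ → ℝ) :=
        LinearMap.finrank_le_finrank_of_injective hΦinj
    _ = Fintype.card _ := Module.finrank_pi ℝ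
    _ = Module.finrank ℝ E := (Module.finrank_eq_card_basis b).symm
    _ = k := finrank_euclideanSpace_fin

/-- Projection onto the top-left 3×3 block. -/
def blk : Matrix (Fin 6) (Fin 6) ℝ →ₗ[ℝ] Matrix (Fin 3) (Fin 3) ℝ :=
  { toFun := fun D => Matrix.of fun i j : Fin 3 => D (![0, 1, 2] i) (![0, 1, 2] j)
    map_add' := fun _ _ => rfl
    map_smul' := fun _ _ => rfl }

lemma blk_apply (D : Matrix (Fin 6) (Fin 6) ℝ) (i j : Fin 3) :
    blk D i j = D (![0, 1, 2] i) (![0, 1, 2] j) := rfl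

lemma blk_bigM (a b c d e f : ℝ) :
    blk (bigM a b c d e f) = !![a, b, c; b, d, e; c, e, f] := by
  ext i j
  fin_cases i <;> fin_cases j <;> rfl

set_option maxHeartbeats 1000000 in
lemma blk_mul_bigM (a b c d e f a' b' c' d' e' f' : ℝ) :
    blk (bigM a b c d e f * bigM a' b' c' d' e' f') =
      blk (bigM a b c d e f) * blk (bigM a' b' c' d' e' f') := by
  ext i j
  fin_cases i <;> fin_cases j <;>
    simp [blk_apply, bigM, Matrix.mul_apply, Fin.sum_univ_six, Fin.sum_univ_three,
      Matrix.vecHead, Matrix.vecTail] <;> ring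

lemma bigM_zero : bigM 0 0 0 0 0 0 = 0 := by
  ext i j
  fin_cases i <;> fin_cases j <;>
    simp [bigM, Matrix.vecHead, Matrix.vecTail]

set_option maxHeartbeats 1000000 in
/-- The parametrization of `S24`. -/
def diagMap : (Fin 3 → ℝ) →ₗ[ℝ] Matrix (Fin 6) (Fin 6) ℝ :=
  { toFun := fun v =>
      Matrix.diagonal ![v 0, v 1, v 2, v 0 + v 1, v 0 + v 2, v 1 + v 2]
    map_add' := by
      intro v w
      ext i j
      fin_cases i <;> fin_cases j <;>
        simp [Matrix.diagonal, Matrix.vecHead, Matrix.vecTail] <;> ring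
    map_smul' := by
      intro r v
      ext i j
      fin_cases i <;> fin_cases j <;>
        simp [Matrix.diagonal, Matrix.vecHead, Matrix.vecTail] <;> ring }

theorem stmt13 :
    (∀ D : Matrix (Fin 6) (Fin 6) ℝ, D.IsSymm →
      (IsDerivMu24 D ↔ ∃ a b c d e f : ℝ,
        D = !![a, b, c, 0, 0, 0;
               b, d, e, 0, 0, 0;
               c, e, f, 0, 0, 0;
               0, 0, 0, a + d, e, -c;
               0, 0, 0, e, a + f, b;
               0, 0, 0, -c, b, d + f])) ∧
    (∀ D ∈ S24, D.IsSymm ∧ IsDerivMu24 D) ∧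
    (∀ D ∈ S24, ∀ E ∈ S24, D * E = E * D) ∧
    (∃ A : Submodule ℝ (Matrix (Fin 6) (Fin 6) ℝ),
        (A : Set (Matrix (Fin 6) (Fin 6) ℝ)) = S24 ∧ Module.finrank ℝ A = 3) ∧
    (∀ V : Submodule ℝ (Matrix (Fin 6) (Fin 6) ℝ),
        (∀ D ∈ V, D.IsSymm ∧ IsDerivMu24 D) →
        (∀ D ∈ V, ∀ E ∈ V, D * E = E * D) →
        Module.finrank ℝ V ≤ 3) := by
  refine ⟨?_, ?_, ?_, ?_, ?_⟩
  · -- part (i)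
    intro D hD
    constructor
    · intro h
      exact isDeriv_char D hD h
    · rintro ⟨a, b, c, d, e, f, rfl⟩
      exact bigM_isDeriv a b c d e f
  · -- part (ii)
    rintro D ⟨a, b, c, rfl⟩
    refine ⟨Matrix.isSymm_diagonal _, ?_⟩
    rw [diag_eq_bigM]
    exact bigM_isDeriv a 0 0 b 0 c
  · -- part (iii)
    rintro D ⟨a, b, c, rfl⟩ E ⟨a', b', c', rfl⟩
    rw [Matrix.diagonal_mul_diagonal, Matrix.diagonal_mul_diagonal]
    have hcm : (fun i => ![a, b, c, a + b, a + c, b + c] i * ![a', b', c', a' + b', a' + c', b' + c'] i)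
        = (fun i => ![a', b', c', a' + b', a' + c', b' + c'] i * ![a, b, c, a + b, a + c, b + c] i) :=
      funext fun i => mul_comm _ _
    rw [hcm]
  · -- part (iv)
    refine ⟨LinearMap.range diagMap, ?_, ?_⟩
    · ext D
      constructor
      · rintro ⟨v, rfl⟩
        exact ⟨v 0, v 1, v 2, rfl⟩
      · rintro ⟨a, b, c, rfl⟩
        exact ⟨![a, b, c], rfl⟩
    · have hinj : Function.Injective diagMap := by
        intro v w h
        funext i
        fin_cases i
        · simpa [diagMap] using congrFun (congrFun h 0) 0
        · simpa [diagMap] using congrFun (congrFun h 1) 1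
        · simpa [diagMap] using congrFun (congrFun h 2) 2
      rw [LinearMap.finrank_range_of_inj hinj]
      simp
  · -- part (v)
    intro V hsd hcomm
    have hform : ∀ D ∈ V, ∃ a b c d e f : ℝ, D = bigM a b c d e f := fun D hD =>
      isDeriv_char D (hsd D hD).1 (hsd D hD).2
    let L := blk.comp V.subtype
    have hLinj : Function.Injective L := by
      rw [injective_iff_map_eq_zero]
      intro x hx
      obtain ⟨a, b, c, d, e, f, hx'⟩ := hform x x.2
      have hblk : blk (x : Matrix (Fin 6) (Fin 6) ℝ) = 0 := hx
      rw [hx', blk_bigM] at hblk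
      have ha : a = 0 := by simpa using congrFun (congrFun hblk 0) 0
      have hb : b = 0 := by simpa using congrFun (congrFun hblk 0) 1
      have hc : c = 0 := by simpa using congrFun (congrFun hblk 0) 2
      have hd : d = 0 := by simpa using congrFun (congrFun hblk 1) 1
      have he : e = 0 := by simpa using congrFun (congrFun hblk 1) 2
      have hf : f = 0 := by simpa using congrFun (congrFun hblk 2) 2
      apply Subtype.ext
      rw [hx', ha, hb, hc, hd, he, hf, bigM_zero]
      rfl
    have h1 : ∀ A ∈ LinearMap.range L, A.IsSymm := by
      rintro A ⟨x, rfl⟩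
      obtain ⟨a, b, c, d, e, f, hx'⟩ := hform x x.2
      show (blk (x : Matrix (Fin 6) (Fin 6) ℝ)).IsSymm
      rw [hx', blk_bigM]
      ext i j
      fin_cases i <;> fin_cases j <;>
        simp [Matrix.vecHead, Matrix.vecTail]
    have h2 : ∀ A ∈ LinearMap.range L, ∀ B ∈ LinearMap.range L, A * B = B * A := by
      rintro A ⟨x, rfl⟩ B ⟨y, rfl⟩
      obtain ⟨a, b, c, d, e, f, hx'⟩ := hform x x.2
      obtain ⟨a', b', c', d', e', f', hy'⟩ := hform y y.2
      show blk (x : Matrix (Fin 6) (Fin 6) ℝ) * blk (y : Matrix (Fin 6) (Fin 6) ℝ) =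
        blk (y : Matrix (Fin 6) (Fin 6) ℝ) * blk (x : Matrix (Fin 6) (Fin 6) ℝ)
      rw [hx', hy', ← blk_mul_bigM, ← blk_mul_bigM, ← hx', ← hy',
        hcomm _ x.2 _ y.2]
    have := finrank_le_of_commuting_symm (LinearMap.range L) h1 h2
    rwa [LinearMap.finrank_range_of_inj hLinj] at this
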